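/- Let α ∈ (0,1) and h > 0, and let f : ℝ → ℝ be integrable. Then the Fourier transform of the fractional difference Δ_h^α f(x) = Σ_{k=0}^∞ (−1)^k C(α,k) f(x − kh) satisfies F(Δ_h^α f)(ξ) = (1 − e^{−i h ξ})^α F(f)(ξ), where C(α,k) = α(α−1)⋯(α−k+1)/k! is the generalized binomial coefficient and (1 − z)^α = Σ_{k=0}^∞ (−1)^k C(α,k) z^k for |z| ≤ 1. -/

import Mathlib

open MeasureTheory Set Real
open scoped ENNReal NNReal

/-- Generalized binomial coefficient `C(α, k) = α (α-1) ⋯ (α-k+1) / k!`. -/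
noncomputable def genBinom (α : ℝ) (k : ℕ) : ℝ :=
  (∏ i ∈ Finset.range k, (α - i)) / (k.factorial : ℝ)

/-- Telescoping sequence `s k = ∏_{i<k} (i+1-α)/(i+1)`. -/
noncomputable def genS (α : ℝ) (k : ℕ) : ℝ :=
  ∏ i ∈ Finset.range k, (((i : ℝ) + 1 - α) / ((i : ℝ) + 1))

lemma genS_nonneg {α : ℝ} (hα : α ∈ Set.Ioo (0:ℝ) 1) (k : ℕ) : 0 ≤ genS α k := by
  apply Finset.prod_nonneg
  intro i _
  have h1 : α < 1 := hα.2
  have h2 : (0:ℝ) ≤ (i:ℝ) := Nat.cast_nonneg i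
  have h3 : (0:ℝ) ≤ (i:ℝ) + 1 - α := by linarith
  positivity

lemma abs_genBinom_succ {α : ℝ} (hα : α ∈ Set.Ioo (0:ℝ) 1) (k : ℕ) :
    |genBinom α (k+1)| = genS α k - genS α (k+1) := by
  obtain ⟨h0, h1⟩ := hα
  have hprod : ∏ i ∈ Finset.range (k+1), |α - (i:ℝ)|
      = α * ∏ i ∈ Finset.range k, ((i:ℝ) + 1 - α) := by
    rw [Finset.prod_range_succ' (fun i => |α - (i:ℝ)|) k]
    rw [Nat.cast_zero, sub_zero, abs_of_pos h0, mul_comm]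
    congr 1
    apply Finset.prod_congr rfl
    intro i _
    have h2 : (0:ℝ) ≤ (i:ℝ) := Nat.cast_nonneg i
    have h3 : α - ((i:ℝ)+1) ≤ 0 := by linarith
    rw [show ((i:ℕ)+1 : ℕ) = i + 1 from rfl]
    push_cast
    rw [abs_of_nonpos h3]
    ring
  have hS : ∀ n : ℕ, genS α n = (∏ i ∈ Finset.range n, ((i:ℝ) + 1 - α)) / (n.factorial : ℝ) := by
    intro n
    rw [genS, Finset.prod_div_distrib]
    congr 1
    rw [show (∏ i ∈ Finset.range n, ((i:ℝ) + 1)) = ((∏ i ∈ Finset.range n, (i + 1) : ℕ) : ℝ)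
      by push_cast; rfl]
    rw [Finset.prod_range_add_one_eq_factorial]
  have habs : |genBinom α (k+1)|
      = α * (∏ i ∈ Finset.range k, ((i:ℝ) + 1 - α)) / (((k+1).factorial : ℕ) : ℝ) := by
    rw [genBinom, abs_div, Finset.abs_prod, Nat.abs_cast, hprod]
  rw [habs, hS k, hS (k+1), Finset.prod_range_succ]
  have hfk : ((k.factorial : ℕ) : ℝ) ≠ 0 := Nat.cast_ne_zero.mpr k.factorial_ne_zero
  have hk1 : ((k:ℝ) + 1) ≠ 0 := by positivity
  rw [Nat.factorial_succ]
  push_cast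
  field_simp
  ring

lemma genBinom_zero (α : ℝ) : genBinom α 0 = 1 := by
  simp [genBinom]

lemma summable_abs_genBinom {α : ℝ} (hα : α ∈ Set.Ioo (0:ℝ) 1) :
    Summable (fun k => |genBinom α k|) := by
  apply summable_of_sum_range_le (c := 2) (fun n => abs_nonneg _)
  intro n
  cases n with
  | zero => norm_num
  | succ m =>
    rw [Finset.sum_range_succ' (fun k => |genBinom α k|) m]
    have h1 : ∑ i ∈ Finset.range m, |genBinom α (i+1)| = genS α 0 - genS α m := by
      rw [← Finset.sum_range_sub' (genS α) m]
      exact Finset.sum_congr rfl fun i _ => abs_genBinom_succ hα i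
    have h2 : genS α 0 = 1 := by simp [genS]
    have h3 : 0 ≤ genS α m := genS_nonneg hα m
    rw [h1, genBinom_zero, h2]
    norm_num
    linarith

theorem stmt_15 (α : ℝ) (hα : α ∈ Set.Ioo (0:ℝ) 1) (h : ℝ) (hh : 0 < h)
    (f : ℝ → ℝ) (hf : Integrable f) (ξ : ℝ) :
    (∫ x : ℝ, ((∑' k : ℕ, (-1 : ℝ) ^ k * genBinom α k * f (x - k * h) : ℝ) : ℂ) *
        Complex.exp (-Complex.I * x * ξ)) =
      (∑' k : ℕ, ((-1 : ℝ) ^ k * genBinom α k : ℂ) * Complex.exp (-Complex.I * h * ξ) ^ k) *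
        ∫ x : ℝ, (f x : ℂ) * Complex.exp (-Complex.I * x * ξ) := by
  have hE : ∀ x : ℝ, ‖Complex.exp (-Complex.I * x * ξ)‖ = 1 := by
    intro x
    rw [Complex.norm_exp]
    norm_num [Complex.mul_re, Complex.mul_im]
  set a : ℕ → ℝ := fun k => (-1 : ℝ) ^ k * genBinom α k with ha
  have ha' : ∀ k, (-1 : ℝ) ^ k * genBinom α k = a k := fun k => rfl
  have hsum : Summable (fun k => |a k|) := by
    have : ∀ k, |a k| = |genBinom α k| := by
      intro k; rw [ha]; simp [abs_mul, abs_pow]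
    simpa only [this] using summable_abs_genBinom hα
  set F : ℕ → ℝ → ℂ := fun k x =>
    ((a k * f (x - k * h) : ℝ) : ℂ) * Complex.exp (-Complex.I * x * ξ) with hF
  have hmeas : ∀ k, AEStronglyMeasurable (F k) volume := by
    intro k
    have h1 : Integrable (fun x : ℝ => f (x - k * h)) := hf.comp_sub_right _
    have h2 : AEStronglyMeasurable (fun x : ℝ => ((a k * f (x - k * h) : ℝ) : ℂ)) volume :=
      ((h1.const_mul (a k)).ofReal).aestronglyMeasurable
    exact h2.mul (Complex.continuous_exp.comp ((continuous_const.mul Complex.continuous_ofReal).mul continuous_const)).aestronglyMeasurable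
  have hlin : ∀ k, (∫⁻ x, ‖F k x‖₊) = ‖a k‖₊ * ∫⁻ x, ‖f x‖₊ := by
    intro k
    have h1 : ∀ x : ℝ, (‖F k x‖₊ : ℝ≥0∞) = (‖a k‖₊ : ℝ≥0∞) * ‖f (x - k * h)‖₊ := by
      intro x
      have hn : ‖F k x‖ = ‖a k‖ * ‖f (x - k * h)‖ := by
        rw [hF]
        simp only [norm_mul, Complex.norm_real, hE x, mul_one, norm_mul]
      rw [← ENNReal.coe_mul]
      congr 1
      ext
      simp [hn]
    simp_rw [h1]
    rw [lintegral_const_mul' _ _ ENNReal.coe_ne_top]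
    congr 1
    exact lintegral_sub_right_eq_self (fun x => (‖f x‖₊ : ℝ≥0∞)) ((k:ℝ) * h)
  have hfin : (∑' k : ℕ, ∫⁻ x, ‖F k x‖₊) ≠ ⊤ := by
    simp_rw [hlin]
    rw [ENNReal.tsum_mul_right]
    apply ENNReal.mul_ne_top
    · rw [ENNReal.tsum_coe_ne_top_iff_summable]
      apply NNReal.summable_coe.mp
      simpa only [coe_nnnorm, Real.norm_eq_abs] using hsum
    · exact hf.2.ne
  have hptwise : ∀ x : ℝ,
      ((∑' k : ℕ, a k * f (x - k * h) : ℝ) : ℂ) * Complex.exp (-Complex.I * x * ξ)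
        = ∑' k : ℕ, F k x := by
    intro x
    rw [Complex.ofReal_tsum]
    exact (tsum_mul_right).symm
  have key : ∀ k : ℕ, (∫ x : ℝ, F k x)
      = ((a k : ℂ) * Complex.exp (-Complex.I * h * ξ) ^ k) *
        ∫ x : ℝ, (f x : ℂ) * Complex.exp (-Complex.I * x * ξ) := by
    intro k
    set g : ℝ → ℂ := fun y =>
      (f y : ℂ) * Complex.exp (-Complex.I * ((y : ℂ) + (k : ℂ) * (h : ℂ)) * ξ) with hg
    have hgx : ∀ x : ℝ, F k x = (a k : ℂ) * g (x - (k : ℝ) * h) := by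
      intro x
      rw [hF, hg]
      push_cast
      rw [mul_assoc]
      congr 2
      ring_nf
    calc (∫ x : ℝ, F k x) = ∫ x : ℝ, (a k : ℂ) * g (x - (k : ℝ) * h) := by
          exact integral_congr_ae (Filter.Eventually.of_forall hgx)
      _ = (a k : ℂ) * ∫ x : ℝ, g (x - (k : ℝ) * h) := integral_const_mul _ _
      _ = (a k : ℂ) * ∫ y : ℝ, g y := by rw [integral_sub_right_eq_self g ((k:ℝ) * h)]
      _ = ((a k : ℂ) * Complex.exp (-Complex.I * h * ξ) ^ k) *
            ∫ x : ℝ, (f x : ℂ) * Complex.exp (-Complex.I * x * ξ) := by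
          have hgsplit : ∀ y : ℝ, g y =
              ((f y : ℂ) * Complex.exp (-Complex.I * y * ξ)) *
                Complex.exp ((k : ℂ) * (-Complex.I * h * ξ)) := by
            intro y
            rw [hg, mul_assoc, ← Complex.exp_add]
            ring_nf
          rw [integral_congr_ae (Filter.Eventually.of_forall hgsplit),
            integral_mul_const, Complex.exp_nat_mul]
          ring
  calc (∫ x : ℝ, ((∑' k : ℕ, (-1 : ℝ) ^ k * genBinom α k * f (x - k * h) : ℝ) : ℂ) *
        Complex.exp (-Complex.I * x * ξ))
      = ∫ x : ℝ, ∑' k : ℕ, F k x := by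
        apply integral_congr_ae
        apply Filter.Eventually.of_forall
        intro x
        exact hptwise x
    _ = ∑' k : ℕ, ∫ x : ℝ, F k x := integral_tsum hmeas hfin
    _ = (∑' k : ℕ, ((-1 : ℝ) ^ k * genBinom α k : ℂ) * Complex.exp (-Complex.I * h * ξ) ^ k) *
        ∫ x : ℝ, (f x : ℂ) * Complex.exp (-Complex.I * x * ξ) := by
        simp_rw [key, ha]
        push_cast
        exact tsum_mul_right
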